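/- Let E be a finite-dimensional real inner product space and w* ∈ E with ‖w*‖ = 1. Define the phase-retrieval population loss F : E → ℝ by F(u) = ‖u‖² − ⟨u, w*⟩² + (3/4)(‖u‖² − 1)². Let w : [0,∞) → E be a gradient-flow trajectory of F with ⟨w(0), w*⟩ ≠ 0. Then for every t ≥ 0, F(w(t)) ≤ F(w(0)) · min{1, exp(−t + 1/⟨w(0), w*⟩²)}. -/

import Mathlib

open RealInnerProductSpace Real Set


theorem maxsq_deriv (x : ℝ) : HasDerivAt (fun y : ℝ => max y 0 ^ 2) (2 * max x 0) x := by
  rcases lt_trichotomy x 0 with h | h | h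
  · have he : (fun y : ℝ => max y 0 ^ 2) =ᶠ[nhds x] fun _ => (0:ℝ) := by
      filter_upwards [eventually_lt_nhds h] with y hy
      simp [max_eq_right hy.le]
    rw [max_eq_right h.le, mul_zero]
    exact (hasDerivAt_const x (0:ℝ)).congr_of_eventuallyEq he
  · subst h
    rw [max_self, mul_zero]
    rw [hasDerivAt_iff_isLittleO, Asymptotics.isLittleO_iff]
    intro c hc
    filter_upwards [Metric.ball_mem_nhds 0 hc] with y hy
    have h1 : |max y 0| ≤ |y| := by
      rcases le_total y 0 with h2 | h2
      · simp [max_eq_right h2]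
      · simp [max_eq_left h2]
    have h2 : |y| < c := by simpa [Real.dist_eq] using hy
    have : ‖max y 0 ^ 2 - (max (0:ℝ) 0) ^ 2 - (y - 0) • (0:ℝ)‖ = |max y 0| * |max y 0| := by
      simp [sq, abs_mul]
    rw [this]
    calc |max y 0| * |max y 0| ≤ c * |y| :=
          mul_le_mul (le_of_lt (lt_of_le_of_lt h1 h2)) h1 (abs_nonneg _) hc.le
      _ = c * ‖y - 0‖ := by simp
  · have he : (fun y : ℝ => max y 0 ^ 2) =ᶠ[nhds x] fun y => y ^ 2 := by
      filter_upwards [eventually_gt_nhds h] with y hy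
      simp [max_eq_left hy.le]
    rw [max_eq_left h.le]
    have h2 : HasDerivAt (fun y : ℝ => y ^ 2) (2 * x) x := by
      simpa using hasDerivAt_pow 2 x
    exact h2.congr_of_eventuallyEq he

theorem key_ineq (r h : ℝ) (h0 : 0 ≤ h) (hr : h ≤ r) :
    (r - h + (3/4)*(r-1)^2) * (6*r-5) ≤ (3*r-1)^2*r - 4*h*(3*r-2) := by
  nlinarith [sq_nonneg (r-1), sq_nonneg (r-h), mul_nonneg (sub_nonneg.2 hr) (sq_nonneg (r-1)),
    mul_nonneg h0 (sq_nonneg (r-1)), mul_nonneg (sub_nonneg.2 hr) h0, sq_nonneg (r+1)]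

section
variable {E : Type*} [NormedAddCommGroup E] [InnerProductSpace ℝ E] [FiniteDimensional ℝ E]

theorem grad_aux' (wstar : E) (u : E) :
    HasGradientAt (fun u : E => ‖u‖ ^ 2 - ⟪u, wstar⟫ ^ 2 + (3 / 4) * (‖u‖ ^ 2 - 1) ^ 2)
      ((3 * ‖u‖ ^ 2 - 1) • u - (2 * ⟪u, wstar⟫) • wstar) u := by
  rw [hasGradientAt_iff_hasFDerivAt]
  have hn : ∀ v : E, ‖v‖ ^ 2 = ⟪v, v⟫ := fun v => (real_inner_self_eq_norm_sq v).symm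
  have h1 : HasFDerivAt (fun v : E => ⟪v, v⟫)
      ((fderivInnerCLM ℝ (u, u)).comp ((ContinuousLinearMap.id ℝ E).prod (ContinuousLinearMap.id ℝ E))) u :=
    (hasFDerivAt_id u).inner ℝ (hasFDerivAt_id u)
  have h2 : HasFDerivAt (fun v : E => ⟪v, wstar⟫)
      ((fderivInnerCLM ℝ (u, wstar)).comp ((ContinuousLinearMap.id ℝ E).prod (0 : E →L[ℝ] E))) u :=
    (hasFDerivAt_id u).inner ℝ (hasFDerivAt_const wstar u)
  have h3 : HasFDerivAt (fun v : E => ‖v‖ ^ 2 - ⟪v, wstar⟫ ^ 2 + (3 / 4) * (‖v‖ ^ 2 - 1) ^ 2)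
      (((fderivInnerCLM ℝ (u, u)).comp ((ContinuousLinearMap.id ℝ E).prod (ContinuousLinearMap.id ℝ E))
        - (2 * ⟪u, wstar⟫) • ((fderivInnerCLM ℝ (u, wstar)).comp ((ContinuousLinearMap.id ℝ E).prod (0 : E →L[ℝ] E))))
        + ((3/4) * (2 * (⟪u,u⟫ - 1))) • ((fderivInnerCLM ℝ (u, u)).comp ((ContinuousLinearMap.id ℝ E).prod (ContinuousLinearMap.id ℝ E)))) u := by
    simp only [hn, pow_two]
    have ha : HasFDerivAt (fun v : E => ⟪v, wstar⟫ * ⟪v, wstar⟫)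
        ((2 * ⟪u, wstar⟫) • ((fderivInnerCLM ℝ (u, wstar)).comp ((ContinuousLinearMap.id ℝ E).prod (0 : E →L[ℝ] E)))) u := by
      have := h2.mul h2
      refine this.congr_fderiv ?_
      ext v; simp; ring
    have hb : HasFDerivAt (fun v : E => (3/4 : ℝ) * ((⟪v, v⟫ - 1) * (⟪v, v⟫ - 1)))
        (((3/4) * (2 * (⟪u,u⟫ - 1))) • ((fderivInnerCLM ℝ (u, u)).comp ((ContinuousLinearMap.id ℝ E).prod (ContinuousLinearMap.id ℝ E)))) u := by
      have := (((h1.sub_const 1).mul (h1.sub_const 1)).const_mul (3/4 : ℝ))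
      refine this.congr_fderiv ?_
      ext v; simp; ring
    exact (h1.sub ha).add hb
  refine h3.congr_fderiv ?_
  ext v
  simp [fderivInnerCLM_apply, real_inner_smul_left, inner_sub_left,
    real_inner_comm u v, real_inner_comm wstar v]
  ring

set_option maxHeartbeats 2000000 in
theorem main_test
    (wstar : E) (hws : ‖wstar‖ = 1)
    (w : ℝ → E)
    (hw : ∀ t : ℝ, 0 ≤ t → HasDerivAt w
      (-gradient (fun u : E => ‖u‖ ^ 2 - ⟪u, wstar⟫ ^ 2 + (3 / 4) * (‖u‖ ^ 2 - 1) ^ 2) (w t)) t)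
    (h0 : ⟪w 0, wstar⟫ ≠ 0) :
    ∀ t : ℝ, 0 ≤ t →
      ‖w t‖ ^ 2 - ⟪w t, wstar⟫ ^ 2 + (3 / 4) * (‖w t‖ ^ 2 - 1) ^ 2 ≤
        (‖w 0‖ ^ 2 - ⟪w 0, wstar⟫ ^ 2 + (3 / 4) * (‖w 0‖ ^ 2 - 1) ^ 2) *
          min 1 (Real.exp (-t + 1 / ⟪w 0, wstar⟫ ^ 2)) := by
  -- rewrite flow field explicitly
  have hw' : ∀ t : ℝ, 0 ≤ t → HasDerivAt w
      (-((3 * ‖w t‖ ^ 2 - 1) • w t - (2 * ⟪w t, wstar⟫) • wstar)) t := by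
    intro t ht
    have h1 := hw t ht
    rwa [(grad_aux' wstar (w t)).gradient] at h1
  -- Cauchy–Schwarz
  have hcs : ∀ u : E, ⟪u, wstar⟫ ^ 2 ≤ ‖u‖ ^ 2 := by
    intro u
    have h := abs_real_inner_le_norm u wstar
    calc ⟪u, wstar⟫ ^ 2 = |⟪u, wstar⟫| ^ 2 := (sq_abs _).symm
      _ ≤ (‖u‖ * ‖wstar‖) ^ 2 := pow_le_pow_left₀ (abs_nonneg _) h 2
      _ = ‖u‖ ^ 2 := by rw [hws]; ring
  -- norm of gradient squared
  have hgsq : ∀ u : E, ‖(3 * ‖u‖ ^ 2 - 1) • u - (2 * ⟪u, wstar⟫) • wstar‖ ^ 2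
      = (3 * ‖u‖ ^ 2 - 1) ^ 2 * ‖u‖ ^ 2 - 4 * ⟪u, wstar⟫ ^ 2 * (3 * ‖u‖ ^ 2 - 2) := by
    intro u
    rw [← real_inner_self_eq_norm_sq ((3 * ‖u‖ ^ 2 - 1) • u - (2 * ⟪u, wstar⟫) • wstar), inner_sub_left, inner_sub_right, inner_sub_right]
    have h1 : ⟪wstar, wstar⟫ = 1 := by
      rw [real_inner_self_eq_norm_sq, hws]; norm_num
    simp [inner_sub_left, inner_sub_right, real_inner_smul_left, real_inner_smul_right,
      real_inner_self_eq_norm_sq, h1, real_inner_comm u wstar, norm_smul, mul_pow,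
      Real.norm_eq_abs, sq_abs, hws]
    ring
  -- derivative of a(t) = ⟪w t, wstar⟫
  have ha' : ∀ t : ℝ, 0 ≤ t → HasDerivAt (fun τ => ⟪w τ, wstar⟫)
      (-3 * (‖w t‖ ^ 2 - 1) * ⟪w t, wstar⟫) t := by
    intro t ht
    have hws1 : ⟪wstar, wstar⟫ = 1 := by rw [real_inner_self_eq_norm_sq, hws]; norm_num
    have h1 := (hw' t ht).inner ℝ (hasDerivAt_const t wstar)
    refine h1.congr_deriv ?_
    simp [inner_sub_left, real_inner_smul_left, hws1, hws]
    ring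
  -- derivative of η(t) = a(t)^2
  have hη' : ∀ t : ℝ, 0 ≤ t → HasDerivAt (fun τ => ⟪w τ, wstar⟫ ^ 2)
      (-6 * (‖w t‖ ^ 2 - 1) * ⟪w t, wstar⟫ ^ 2) t := by
    intro t ht
    have h1 := (ha' t ht).mul (ha' t ht)
    have heq : (fun τ => ⟪w τ, wstar⟫ ^ 2) = fun τ => ⟪w τ, wstar⟫ * ⟪w τ, wstar⟫ := by
      funext τ; ring
    rw [heq]
    refine h1.congr_deriv ?_
    ring
  -- derivative of f(t) = F (w t)
  have hf' : ∀ t : ℝ, 0 ≤ t → HasDerivAt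
      (fun τ => ‖w τ‖ ^ 2 - ⟪w τ, wstar⟫ ^ 2 + (3/4) * (‖w τ‖ ^ 2 - 1) ^ 2)
      (-‖(3 * ‖w t‖ ^ 2 - 1) • w t - (2 * ⟪w t, wstar⟫) • wstar‖ ^ 2) t := by
    intro t ht
    have h1 := ((grad_aux' wstar (w t)).hasFDerivAt).comp_hasDerivAt t (hw' t ht)
    refine h1.congr_deriv ?_
    rw [InnerProductSpace.toDual_apply_apply, inner_neg_right, real_inner_self_eq_norm_sq]
  -- nonvanishing of a(t)
  have hane : ∀ t : ℝ, 0 ≤ t → ⟪w t, wstar⟫ ≠ 0 := by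
    intro t1 ht1 hzero
    have hwc : ContinuousOn w (Icc 0 t1) := fun τ hτ => (hw' τ hτ.1).continuousAt.continuousWithinAt
    have hmaps : ∀ τ ∈ Icc (0:ℝ) t1, t1 - τ ∈ Icc (0:ℝ) t1 := by
      intro τ hτ; exact ⟨by linarith [hτ.2], by linarith [hτ.1]⟩
    have hwc2 : ContinuousOn (fun τ => w (t1 - τ)) (Icc 0 t1) :=
      hwc.comp ((continuousOn_const).sub continuousOn_id) hmaps
    have hc : ContinuousOn (fun τ => 3 * (‖w (t1 - τ)‖ ^ 2 - 1)) (Icc 0 t1) := by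
      apply ContinuousOn.mul continuousOn_const
      exact ((hwc2.norm.pow 2).sub continuousOn_const)
    obtain ⟨K, hK⟩ := (isCompact_Icc).exists_bound_of_continuousOn hc
    have hb' : ∀ τ ∈ Ico (0:ℝ) t1, HasDerivAt (fun τ => ⟪w (t1 - τ), wstar⟫)
        (3 * (‖w (t1 - τ)‖ ^ 2 - 1) * ⟪w (t1 - τ), wstar⟫) τ := by
      intro τ hτ
      have hin : (0:ℝ) ≤ t1 - τ := by linarith [hτ.2]
      have h1 := (ha' (t1 - τ) hin).comp τ ((hasDerivAt_const τ t1).sub (hasDerivAt_id τ))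
      have h2 : HasDerivAt (fun x : ℝ => t1 - x) (0 - 1) τ := (hasDerivAt_const τ t1).sub (hasDerivAt_id τ)
      have h3 := (ha' (t1 - τ) hin).comp τ h2
      refine h3.congr_deriv ?_
      ring
    have hgron := norm_le_gronwallBound_of_norm_deriv_right_le
      (f := fun τ => ⟪w (t1 - τ), wstar⟫)
      (f' := fun τ => 3 * (‖w (t1 - τ)‖ ^ 2 - 1) * ⟪w (t1 - τ), wstar⟫)
      (δ := 0) (K := K) (ε := 0) (a := 0) (b := t1)
      (fun τ hτ => ((hwc2.inner (continuousOn_const : ContinuousOn (fun _ => wstar) _)) τ hτ))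
      (fun τ hτ => (hb' τ hτ).hasDerivWithinAt)
      (by simp [sub_zero, hzero])
      (by
        intro τ hτ
        have h4 := hK τ (Ico_subset_Icc_self hτ)
        rw [norm_mul]
        have h5 : ‖⟪w (t1 - τ), wstar⟫‖ ≤ ‖⟪w (t1 - τ), wstar⟫‖ := le_refl _
        calc ‖3 * (‖w (t1 - τ)‖ ^ 2 - 1)‖ * ‖⟪w (t1 - τ), wstar⟫‖
            ≤ K * ‖⟪w (t1 - τ), wstar⟫‖ := mul_le_mul_of_nonneg_right h4 (norm_nonneg _)
          _ = K * ‖⟪w (t1 - τ), wstar⟫‖ + 0 := by ring)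
    have h6 := hgron t1 ⟨ht1, le_refl t1⟩
    rw [gronwallBound_ε0_δ0] at h6
    simp only [sub_self] at h6
    have h7 : ⟪w 0, wstar⟫ = 0 := by
      have := norm_le_zero_iff.1 h6
      exact this
    exact h0 h7
  -- nonnegativity of F
  have hFnn : ∀ u : E, 0 ≤ ‖u‖ ^ 2 - ⟪u, wstar⟫ ^ 2 + (3/4) * (‖u‖ ^ 2 - 1) ^ 2 := by
    intro u; nlinarith [hcs u, sq_nonneg (‖u‖ ^ 2 - 1)]
  -- key pointwise inequality
  have hkey : ∀ u : E, (‖u‖ ^ 2 - ⟪u, wstar⟫ ^ 2 + (3/4) * (‖u‖ ^ 2 - 1) ^ 2) * (6 * ‖u‖ ^ 2 - 5)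
      ≤ ‖(3 * ‖u‖ ^ 2 - 1) • u - (2 * ⟪u, wstar⟫) • wstar‖ ^ 2 := by
    intro u; rw [hgsq u]
    exact key_ineq (‖u‖ ^ 2) (⟪u, wstar⟫ ^ 2) (sq_nonneg _) (hcs u)
  -- monotonicity of F along the flow
  have hM1 : AntitoneOn
      (fun τ => ‖w τ‖ ^ 2 - ⟪w τ, wstar⟫ ^ 2 + (3/4) * (‖w τ‖ ^ 2 - 1) ^ 2) (Ici 0) := by
    apply antitoneOn_of_deriv_nonpos (convex_Ici 0)
    · intro τ hτ; exact (hf' τ hτ).continuousAt.continuousWithinAt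
    · intro τ hτ; rw [interior_Ici] at hτ
      exact (hf' τ hτ.le).differentiableAt.differentiableWithinAt
    · intro τ hτ; rw [interior_Ici] at hτ
      rw [(hf' τ hτ.le).deriv]
      exact neg_nonpos.2 (sq_nonneg _)
  -- the Lyapunov function Z
  have hZd : ∀ t : ℝ, 0 ≤ t → HasDerivAt
      (fun τ => (‖w τ‖ ^ 2 - ⟪w τ, wstar⟫ ^ 2 + (3/4) * (‖w τ‖ ^ 2 - 1) ^ 2) * Real.exp τ
        * (⟪w τ, wstar⟫ ^ 2)⁻¹)
      ((-‖(3 * ‖w t‖ ^ 2 - 1) • w t - (2 * ⟪w t, wstar⟫) • wstar‖ ^ 2 * Real.exp t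
          + (‖w t‖ ^ 2 - ⟪w t, wstar⟫ ^ 2 + (3/4) * (‖w t‖ ^ 2 - 1) ^ 2) * Real.exp t)
          * (⟪w t, wstar⟫ ^ 2)⁻¹
        + ((‖w t‖ ^ 2 - ⟪w t, wstar⟫ ^ 2 + (3/4) * (‖w t‖ ^ 2 - 1) ^ 2) * Real.exp t)
          * (-(-6 * (‖w t‖ ^ 2 - 1) * ⟪w t, wstar⟫ ^ 2) / (⟪w t, wstar⟫ ^ 2) ^ 2)) t := by
    intro t ht
    exact ((hf' t ht).mul (Real.hasDerivAt_exp t)).mul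
      ((hη' t ht).inv (pow_ne_zero 2 (hane t ht)))
  have hM2 : AntitoneOn
      (fun τ => (‖w τ‖ ^ 2 - ⟪w τ, wstar⟫ ^ 2 + (3/4) * (‖w τ‖ ^ 2 - 1) ^ 2) * Real.exp τ
        * (⟪w τ, wstar⟫ ^ 2)⁻¹) (Ici 0) := by
    apply antitoneOn_of_deriv_nonpos (convex_Ici 0)
    · intro τ hτ; exact (hZd τ hτ).continuousAt.continuousWithinAt
    · intro τ hτ; rw [interior_Ici] at hτ
      exact (hZd τ hτ.le).differentiableAt.differentiableWithinAt
    · intro τ hτ; rw [interior_Ici] at hτ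
      rw [(hZd τ hτ.le).deriv]
      have hηt : 0 < ⟪w τ, wstar⟫ ^ 2 :=
        lt_of_le_of_ne (sq_nonneg _) (Ne.symm (pow_ne_zero 2 (hane τ hτ.le)))
      have heq : (-‖(3 * ‖w τ‖ ^ 2 - 1) • w τ - (2 * ⟪w τ, wstar⟫) • wstar‖ ^ 2 * Real.exp τ
          + (‖w τ‖ ^ 2 - ⟪w τ, wstar⟫ ^ 2 + (3/4) * (‖w τ‖ ^ 2 - 1) ^ 2) * Real.exp τ)
          * (⟪w τ, wstar⟫ ^ 2)⁻¹
        + ((‖w τ‖ ^ 2 - ⟪w τ, wstar⟫ ^ 2 + (3/4) * (‖w τ‖ ^ 2 - 1) ^ 2) * Real.exp τ)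
          * (-(-6 * (‖w τ‖ ^ 2 - 1) * ⟪w τ, wstar⟫ ^ 2) / (⟪w τ, wstar⟫ ^ 2) ^ 2)
        = Real.exp τ * (⟪w τ, wstar⟫ ^ 2)⁻¹
          * ((‖w τ‖ ^ 2 - ⟪w τ, wstar⟫ ^ 2 + (3/4) * (‖w τ‖ ^ 2 - 1) ^ 2) * (6 * ‖w τ‖ ^ 2 - 5)
            - ‖(3 * ‖w τ‖ ^ 2 - 1) • w τ - (2 * ⟪w τ, wstar⟫) • wstar‖ ^ 2) := by
        field_simp
        ring
      rw [heq]
      apply mul_nonpos_of_nonneg_of_nonpos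
      · positivity
      · linarith [hkey (w τ)]
  -- bound on η
  have hM3 : ∀ t : ℝ, 0 ≤ t → ⟪w t, wstar⟫ ^ 2 ≤ max (⟪w 0, wstar⟫ ^ 2) 1 := by
    intro t ht
    set M := max (⟪w 0, wstar⟫ ^ 2) 1 with hMdef
    have hPd : ∀ τ : ℝ, 0 ≤ τ → HasDerivAt (fun σ => max (⟪w σ, wstar⟫ ^ 2 - M) 0 ^ 2)
        (2 * max (⟪w τ, wstar⟫ ^ 2 - M) 0 * (-6 * (‖w τ‖ ^ 2 - 1) * ⟪w τ, wstar⟫ ^ 2)) τ := by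
      intro τ hτ
      have h1 := (maxsq_deriv (⟪w τ, wstar⟫ ^ 2 - M)).comp τ ((hη' τ hτ).sub_const M)
      exact h1
    have hanti : AntitoneOn (fun σ => max (⟪w σ, wstar⟫ ^ 2 - M) 0 ^ 2) (Ici 0) := by
      apply antitoneOn_of_deriv_nonpos (convex_Ici 0)
      · intro τ hτ; exact (hPd τ hτ).continuousAt.continuousWithinAt
      · intro τ hτ; rw [interior_Ici] at hτ
        exact (hPd τ hτ.le).differentiableAt.differentiableWithinAt
      · intro τ hτ; rw [interior_Ici] at hτ
        rw [(hPd τ hτ.le).deriv]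
        rcases le_or_gt (⟪w τ, wstar⟫ ^ 2) M with h | h
        · simp [max_eq_right (sub_nonpos.2 h)]
        · have hM1' : (1:ℝ) ≤ ⟪w τ, wstar⟫ ^ 2 := le_trans (le_max_right _ _) h.le
          have hr1 : (1:ℝ) ≤ ‖w τ‖ ^ 2 := le_trans hM1' (hcs _)
          have hmx : 0 ≤ max (⟪w τ, wstar⟫ ^ 2 - M) 0 := le_max_right _ _
          have hd : -6 * (‖w τ‖ ^ 2 - 1) * ⟪w τ, wstar⟫ ^ 2 ≤ 0 := by
            nlinarith [sq_nonneg ⟪w τ, wstar⟫]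
          nlinarith
    have h8 := hanti self_mem_Ici ht ht
    have hP0 : max (⟪w 0, wstar⟫ ^ 2 - M) 0 ^ 2 = 0 := by
      have h9 : ⟪w 0, wstar⟫ ^ 2 - M ≤ 0 := sub_nonpos.2 (le_max_left _ _)
      simp [max_eq_right h9]
    have h8' : max (⟪w t, wstar⟫ ^ 2 - M) 0 ^ 2 ≤ max (⟪w 0, wstar⟫ ^ 2 - M) 0 ^ 2 := h8
    rw [hP0] at h8'
    by_contra hcon
    push_neg at hcon
    have hpos : 0 < max (⟪w t, wstar⟫ ^ 2 - M) 0 := lt_max_iff.2 (Or.inl (by linarith))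
    have := pow_pos hpos 2
    linarith
  -- final assembly
  intro t ht
  have hη0 : 0 < ⟪w 0, wstar⟫ ^ 2 :=
    lt_of_le_of_ne (sq_nonneg _) (Ne.symm (pow_ne_zero 2 h0))
  have hηt : 0 < ⟪w t, wstar⟫ ^ 2 :=
    lt_of_le_of_ne (sq_nonneg _) (Ne.symm (pow_ne_zero 2 (hane t ht)))
  have hft_le : ‖w t‖ ^ 2 - ⟪w t, wstar⟫ ^ 2 + (3/4) * (‖w t‖ ^ 2 - 1) ^ 2 ≤
      ‖w 0‖ ^ 2 - ⟪w 0, wstar⟫ ^ 2 + (3/4) * (‖w 0‖ ^ 2 - 1) ^ 2 := hM1 self_mem_Ici ht ht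
  have hexp : ‖w t‖ ^ 2 - ⟪w t, wstar⟫ ^ 2 + (3/4) * (‖w t‖ ^ 2 - 1) ^ 2 ≤
      (‖w 0‖ ^ 2 - ⟪w 0, wstar⟫ ^ 2 + (3/4) * (‖w 0‖ ^ 2 - 1) ^ 2) *
        Real.exp (-t + 1 / ⟪w 0, wstar⟫ ^ 2) := by
    have hZ : (‖w t‖ ^ 2 - ⟪w t, wstar⟫ ^ 2 + (3/4) * (‖w t‖ ^ 2 - 1) ^ 2) * Real.exp t
        * (⟪w t, wstar⟫ ^ 2)⁻¹ ≤
        (‖w 0‖ ^ 2 - ⟪w 0, wstar⟫ ^ 2 + (3/4) * (‖w 0‖ ^ 2 - 1) ^ 2) * Real.exp 0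
        * (⟪w 0, wstar⟫ ^ 2)⁻¹ := hM2 self_mem_Ici ht ht
    rw [Real.exp_zero, mul_one] at hZ
    -- bound on η t
    have hb : ⟪w t, wstar⟫ ^ 2 ≤ ⟪w 0, wstar⟫ ^ 2 * Real.exp (1 / ⟪w 0, wstar⟫ ^ 2) := by
      have h12 := hM3 t ht
      have hee : 1 ≤ Real.exp (1 / ⟪w 0, wstar⟫ ^ 2) := Real.one_le_exp (by positivity)
      have h14 : 1 / ⟪w 0, wstar⟫ ^ 2 ≤ Real.exp (1 / ⟪w 0, wstar⟫ ^ 2) := by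
        have := Real.add_one_le_exp (1 / ⟪w 0, wstar⟫ ^ 2)
        linarith
      have h15 : ⟪w 0, wstar⟫ ^ 2 * (1 / ⟪w 0, wstar⟫ ^ 2) = 1 := by field_simp
      have h13 : max (⟪w 0, wstar⟫ ^ 2) 1 ≤
          ⟪w 0, wstar⟫ ^ 2 * Real.exp (1 / ⟪w 0, wstar⟫ ^ 2) := by
        apply max_le
        · nlinarith
        · calc (1:ℝ) = ⟪w 0, wstar⟫ ^ 2 * (1 / ⟪w 0, wstar⟫ ^ 2) := h15.symm
            _ ≤ ⟪w 0, wstar⟫ ^ 2 * Real.exp (1 / ⟪w 0, wstar⟫ ^ 2) :=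
              mul_le_mul_of_nonneg_left h14 hη0.le
      linarith
    have hZ0nn : 0 ≤ (‖w 0‖ ^ 2 - ⟪w 0, wstar⟫ ^ 2 + (3/4) * (‖w 0‖ ^ 2 - 1) ^ 2)
        * (⟪w 0, wstar⟫ ^ 2)⁻¹ :=
      mul_nonneg (hFnn (w 0)) (inv_nonneg.2 hη0.le)
    have step1 : (‖w t‖ ^ 2 - ⟪w t, wstar⟫ ^ 2 + (3/4) * (‖w t‖ ^ 2 - 1) ^ 2) * Real.exp t
        * (⟪w t, wstar⟫ ^ 2)⁻¹ * ⟪w t, wstar⟫ ^ 2 ≤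
        ((‖w 0‖ ^ 2 - ⟪w 0, wstar⟫ ^ 2 + (3/4) * (‖w 0‖ ^ 2 - 1) ^ 2) * (⟪w 0, wstar⟫ ^ 2)⁻¹)
          * (⟪w 0, wstar⟫ ^ 2 * Real.exp (1 / ⟪w 0, wstar⟫ ^ 2)) := by
      exact mul_le_mul hZ hb hηt.le hZ0nn
    have hlhs : (‖w t‖ ^ 2 - ⟪w t, wstar⟫ ^ 2 + (3/4) * (‖w t‖ ^ 2 - 1) ^ 2) * Real.exp t
        * (⟪w t, wstar⟫ ^ 2)⁻¹ * ⟪w t, wstar⟫ ^ 2 =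
        (‖w t‖ ^ 2 - ⟪w t, wstar⟫ ^ 2 + (3/4) * (‖w t‖ ^ 2 - 1) ^ 2) * Real.exp t := by
      rw [mul_assoc _ (⟪w t, wstar⟫ ^ 2)⁻¹, inv_mul_cancel₀ hηt.ne', mul_one]
    have hrhs : ((‖w 0‖ ^ 2 - ⟪w 0, wstar⟫ ^ 2 + (3/4) * (‖w 0‖ ^ 2 - 1) ^ 2)
        * (⟪w 0, wstar⟫ ^ 2)⁻¹) * (⟪w 0, wstar⟫ ^ 2 * Real.exp (1 / ⟪w 0, wstar⟫ ^ 2)) =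
        (‖w 0‖ ^ 2 - ⟪w 0, wstar⟫ ^ 2 + (3/4) * (‖w 0‖ ^ 2 - 1) ^ 2)
          * Real.exp (1 / ⟪w 0, wstar⟫ ^ 2) := by
      field_simp
    rw [hlhs, hrhs] at step1
    have step2 := mul_le_mul_of_nonneg_right step1 (Real.exp_pos (-t)).le
    have hlhs2 : (‖w t‖ ^ 2 - ⟪w t, wstar⟫ ^ 2 + (3/4) * (‖w t‖ ^ 2 - 1) ^ 2) * Real.exp t
        * Real.exp (-t) = ‖w t‖ ^ 2 - ⟪w t, wstar⟫ ^ 2 + (3/4) * (‖w t‖ ^ 2 - 1) ^ 2 := by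
      rw [mul_assoc, ← Real.exp_add]
      simp
    have hrhs2 : (‖w 0‖ ^ 2 - ⟪w 0, wstar⟫ ^ 2 + (3/4) * (‖w 0‖ ^ 2 - 1) ^ 2)
        * Real.exp (1 / ⟪w 0, wstar⟫ ^ 2) * Real.exp (-t) =
        (‖w 0‖ ^ 2 - ⟪w 0, wstar⟫ ^ 2 + (3/4) * (‖w 0‖ ^ 2 - 1) ^ 2)
          * Real.exp (-t + 1 / ⟪w 0, wstar⟫ ^ 2) := by
      rw [mul_assoc, ← Real.exp_add, add_comm (1 / ⟪w 0, wstar⟫ ^ 2) (-t)]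
    rw [hlhs2, hrhs2] at step2
    exact step2
  rcases le_total (1:ℝ) (Real.exp (-t + 1 / ⟪w 0, wstar⟫ ^ 2)) with hm | hm
  · rw [min_eq_left hm, mul_one]; exact hft_le
  · rw [min_eq_right hm]; exact hexp

end

/-- Rate of convergence of gradient flow on the phase-retrieval population loss. -/
theorem phase_retrieval_gradient_flow_rate
    {E : Type*} [NormedAddCommGroup E] [InnerProductSpace ℝ E] [FiniteDimensional ℝ E]
    (wstar : E) (hws : ‖wstar‖ = 1)
    (F : E → ℝ)
    (hFdef : ∀ u : E, F u = ‖u‖ ^ 2 - ⟪u, wstar⟫ ^ 2 + (3 / 4) * (‖u‖ ^ 2 - 1) ^ 2)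
    (w : ℝ → E)
    (hw : ∀ t : ℝ, 0 ≤ t → HasDerivAt w (-gradient F (w t)) t)
    (h0 : ⟪w 0, wstar⟫ ≠ 0) :
    ∀ t : ℝ, 0 ≤ t →
      F (w t) ≤ F (w 0) * min 1 (Real.exp (-t + 1 / ⟪w 0, wstar⟫ ^ 2)) := by
  have hF : F = fun u : E => ‖u‖ ^ 2 - ⟪u, wstar⟫ ^ 2 + (3 / 4) * (‖u‖ ^ 2 - 1) ^ 2 :=
    funext hFdef
  subst hF
  intro t ht
  exact main_test wstar hws w hw h0 t ht
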